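/- The unilateral shift S on ℓ²(ℕ) (S e_n = e_{n+1}) is not a norm limit of complex symmetric operators. -/

import Mathlib

open Filter Topology ContinuousLinearMap
open scoped ENNReal

noncomputable section

def IsConjugation {H : Type*} [NormedAddCommGroup H] [InnerProductSpace ℂ H]
    (C : H → H) : Prop :=
  (∀ x y, C (x + y) = C x + C y) ∧
  (∀ (a : ℂ) (x : H), C (a • x) = (starRingEnd ℂ a) • C x) ∧
  (∀ x, ‖C x‖ = ‖x‖) ∧
  (∀ x, C (C x) = x)

def IsCSO {H : Type*} [NormedAddCommGroup H] [InnerProductSpace ℂ H]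
    [CompleteSpace H] (T : H →L[ℂ] H) : Prop :=
  ∃ C : H → H, IsConjugation C ∧ ∀ x, T x = C (adjoint T (C x))

abbrev L2 : Type := lp (fun _ : ℕ => ℂ) 2

def e (n : ℕ) : L2 := lp.single 2 n 1

lemma e_apply_self (j : ℕ) : (e j) j = 1 := by
  rw [e]
  exact lp.single_apply_self (E := fun _ : ℕ => ℂ) 2 j 1

lemma e_apply_ne {m j : ℕ} (h : m ≠ j) : (e j) m = 0 := by
  rw [e]
  exact lp.single_apply_ne (E := fun _ : ℕ => ℂ) 2 j 1 h

lemma norm_e (n : ℕ) : ‖e n‖ = 1 := by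
  have := lp.norm_single (E := fun _ : ℕ => ℂ) (p := 2) (by norm_num)
    n (1 : ℂ)
  simpa [e] using this

lemma coeff_eq_inner (f : L2) (m : ℕ) : f m = (inner ℂ (e m) f : ℂ) := by
  rw [e, lp.inner_single_left, RCLike.inner_apply]
  simp

lemma hasSum_shift (S : L2 →L[ℂ] L2) (hS : ∀ n, S (e n) = e (n + 1)) (f : L2) :
    HasSum (fun n => f n • e (n + 1)) (S f) := by
  have h := lp.hasSum_single (E := fun _ : ℕ => ℂ) (p := 2) (by norm_num) f
  have h2 := h.mapL S
  convert h2 using 2 with n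
  have hsingle : lp.single 2 n (f n) = f n • e n := by
    rw [e, ← lp.single_smul]
    norm_num
  rw [hsingle, map_smul, hS]

lemma shift_coeff_zero (S : L2 →L[ℂ] L2) (hS : ∀ n, S (e n) = e (n + 1))
    (f : L2) : (S f) 0 = 0 := by
  have h := (hasSum_shift S hS f).mapL (innerSL ℂ (e 0))
  have h0 : ∀ n, (innerSL ℂ (e 0)) (f n • e (n + 1)) = 0 := by
    intro n
    have : (inner ℂ (e 0) (e (n + 1)) : ℂ) = 0 := by
      rw [← coeff_eq_inner]
      exact e_apply_ne (by omega)
    simp [inner_smul_right, this]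
  rw [show (fun n => (innerSL ℂ (e 0)) (f n • e (n + 1))) = fun _ => (0 : ℂ) from
    funext h0] at h
  have := h.unique hasSum_zero
  rw [coeff_eq_inner (S f) 0]
  simpa using this

lemma shift_coeff_succ (S : L2 →L[ℂ] L2) (hS : ∀ n, S (e n) = e (n + 1))
    (f : L2) (k : ℕ) : (S f) (k + 1) = f k := by
  have h := (hasSum_shift S hS f).mapL (innerSL ℂ (e (k + 1)))
  have h0 : ∀ n, (innerSL ℂ (e (k + 1))) (f n • e (n + 1)) =
      if n = k then f k else 0 := by
    intro n
    have hc : (inner ℂ (e (k + 1)) (e (n + 1)) : ℂ) = if n = k then 1 else 0 := by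
      rw [← coeff_eq_inner]
      by_cases hnk : n = k
      · subst hnk
        simp [e_apply_self]
      · rw [if_neg hnk]
        exact e_apply_ne (by omega)
    simp only [innerSL_apply_apply, inner_smul_right, hc]
    by_cases hnk : n = k
    · subst hnk; simp
    · simp [hnk]
  rw [show (fun n => (innerSL ℂ (e (k + 1))) (f n • e (n + 1))) =
      fun n => if n = k then f k else 0 from funext h0] at h
  have := h.unique (hasSum_ite_eq k (f k))
  rw [coeff_eq_inner (S f) (k + 1)]
  simpa using this

lemma norm_shift (S : L2 →L[ℂ] L2) (hS : ∀ n, S (e n) = e (n + 1)) (f : L2) :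
    ‖S f‖ = ‖f‖ := by
  have h2 : (0 : ℝ) < (2 : ℝ≥0∞).toReal := by norm_num
  have hA := lp.hasSum_norm (E := fun _ : ℕ => ℂ) h2 (S f)
  have hB := lp.hasSum_norm (E := fun _ : ℕ => ℂ) h2 f
  have hB' : HasSum (fun n => ‖(S f) (n + 1)‖ ^ (2 : ℝ≥0∞).toReal)
      (‖f‖ ^ (2 : ℝ≥0∞).toReal) := by
    refine hB.congr_fun fun n => ?_
    rw [shift_coeff_succ S hS]
  rw [hasSum_nat_add_iff (f := fun m => ‖(S f) m‖ ^ (2 : ℝ≥0∞).toReal) 1] at hB'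
  have hzero : ∑ i ∈ Finset.range 1, ‖(S f) i‖ ^ (2 : ℝ≥0∞).toReal = 0 := by
    simp [shift_coeff_zero S hS f, Real.zero_rpow (ne_of_gt h2)]
  rw [hzero, add_zero] at hB'
  have heq := hA.unique hB'
  have ht : (2 : ℝ≥0∞).toReal = ((2 : ℕ) : ℝ) := by norm_num
  rw [ht, Real.rpow_natCast, Real.rpow_natCast] at heq
  nlinarith [norm_nonneg (S f), norm_nonneg f, sq_nonneg (‖S f‖ - ‖f‖),
    sq_nonneg (‖S f‖ + ‖f‖)]

lemma adjoint_shift_e0 (S : L2 →L[ℂ] L2) (hS : ∀ n, S (e n) = e (n + 1)) :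
    adjoint S (e 0) = 0 := by
  apply lp.ext
  funext m
  have : ((adjoint S (e 0)) m : ℂ) = inner ℂ (e m) (adjoint S (e 0)) :=
    coeff_eq_inner _ m
  rw [this, adjoint_inner_right, hS, ← coeff_eq_inner]
  exact e_apply_ne (by omega)

/-- The unilateral shift on `ℓ²(ℕ)` is not a norm limit of complex symmetric
operators. -/
theorem shift_not_norm_limit_CSO (S : L2 →L[ℂ] L2)
    (hS : ∀ n, S (e n) = e (n + 1)) :
    ¬ ∃ Tseq : ℕ → (L2 →L[ℂ] L2), (∀ n, IsCSO (Tseq n)) ∧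
      Tendsto Tseq atTop (𝓝 S) := by
  rintro ⟨Tseq, hCSO, htend⟩
  obtain ⟨N, hN⟩ := Metric.tendsto_atTop.mp htend (1 / 2) (by norm_num)
  have hd := hN N le_rfl
  rw [dist_eq_norm] at hd
  set T := Tseq N with hTdef
  obtain ⟨C, ⟨hadd, hsmul, hnorm, hinv⟩, hT⟩ := hCSO N
  set ε := ‖T - S‖ with hε
  -- the adjoint of T almost kills e 0
  have h1 : ‖adjoint T (e 0)‖ ≤ ε := by
    have hsub : adjoint T (e 0) = (adjoint (T - S)) (e 0) := by
      rw [map_sub, ContinuousLinearMap.sub_apply, adjoint_shift_e0 S hS, sub_zero]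
    have hle := (adjoint (T - S)).le_opNorm (e 0)
    have hnorm_adj : ‖adjoint (T - S)‖ = ‖T - S‖ :=
      (adjoint : (L2 →L[ℂ] L2) ≃ₗᵢ⋆[ℂ] (L2 →L[ℂ] L2)).norm_map (T - S)
    rw [hsub]
    calc ‖(adjoint (T - S)) (e 0)‖ ≤ ‖adjoint (T - S)‖ * ‖e 0‖ := hle
      _ = ε := by rw [hnorm_adj, norm_e, mul_one]
  -- complex symmetry transfers the lower bound of T to its adjoint
  have h2 : ‖T (C (e 0))‖ = ‖adjoint T (e 0)‖ := by
    rw [hT (C (e 0)), hinv, hnorm]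
  -- but T is close to the isometry S
  have hCe : ‖C (e 0)‖ = 1 := by rw [hnorm, norm_e]
  have h3 : (1 : ℝ) - ε ≤ ‖T (C (e 0))‖ := by
    have hST : ‖S (C (e 0)) - T (C (e 0))‖ ≤ ε := by
      have hle := (S - T).le_opNorm (C (e 0))
      rw [ContinuousLinearMap.sub_apply] at hle
      calc ‖S (C (e 0)) - T (C (e 0))‖ ≤ ‖S - T‖ * ‖C (e 0)‖ := hle
        _ = ε := by rw [hCe, mul_one, norm_sub_rev]
    have hnS : ‖S (C (e 0))‖ = 1 := by rw [norm_shift S hS, hCe]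
    have := norm_sub_norm_le (S (C (e 0))) (T (C (e 0)))
    rw [hnS] at this
    linarith
  linarith

end
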